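/- Let E be a real inner product space and suppose w₁, …, w_n ∈ E satisfy, for every index j, the strengthened Cauchy–Schwarz inequality ⟪w_j, ∑_{i>j} w_i⟫ ≥ −γ ‖w_j‖ ‖∑_{i>j} w_i‖ with γ ∈ [0,1). Then ‖∑_{j=1}^n w_j‖² ≥ ∑_{j=1}^n (1−γ)^j ‖w_j‖² ≥ (1−γ)^n ∑_{j=1}^n ‖w_j‖². -/

import Mathlib

open scoped RealInnerProductSpace

lemma stmt19_key {E : Type*} [NormedAddCommGroup E] [InnerProductSpace ℝ E]
    (a b : E) (γ : ℝ) (hγ0 : 0 ≤ γ)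
    (h : -(γ * ‖a‖ * ‖b‖) ≤ ⟪a, b⟫) :
    (1 - γ) * (‖a‖ ^ 2 + ‖b‖ ^ 2) ≤ ‖a + b‖ ^ 2 := by
  have hexp : ‖a + b‖ ^ 2 = ‖a‖ ^ 2 + 2 * ⟪a, b⟫ + ‖b‖ ^ 2 := by
    rw [norm_add_sq_real]
  nlinarith [sq_nonneg (‖a‖ - ‖b‖), h]

/-- Telescoping form of the strengthened Cauchy–Schwarz estimate (used in the proof
of Lemma 4.2): if `⟪w_j, ∑_{i>j} w_i⟫ ≥ −γ‖w_j‖‖∑_{i>j} w_i‖` for every `j`, with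
`γ ∈ [0,1)`, then `‖∑ w_j‖² ≥ ∑_j (1−γ)^j ‖w_j‖² ≥ (1−γ)^n ∑_j ‖w_j‖²`
(indices `j = 1,…,n`). -/
theorem stmt19
    {E : Type*} [NormedAddCommGroup E] [InnerProductSpace ℝ E]
    (n : ℕ) (w : Fin n → E) (γ : ℝ) (hγ0 : 0 ≤ γ) (hγ1 : γ < 1)
    (hSCS : ∀ j : Fin n,
      -(γ * ‖w j‖ * ‖∑ i ∈ Finset.univ.filter (fun i => j < i), w i‖) ≤
        ⟪w j, ∑ i ∈ Finset.univ.filter (fun i => j < i), w i⟫) :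
    (∑ j : Fin n, (1 - γ) ^ ((j : ℕ) + 1) * ‖w j‖ ^ 2 ≤ ‖∑ j, w j‖ ^ 2) ∧
      (1 - γ) ^ n * ∑ j, ‖w j‖ ^ 2 ≤ ∑ j : Fin n, (1 - γ) ^ ((j : ℕ) + 1) * ‖w j‖ ^ 2 := by
  have hγ' : (0:ℝ) ≤ 1 - γ := by linarith
  constructor
  · have main : ∀ d : ℕ,
        ∑ i ∈ Finset.univ.filter (fun i : Fin n => n - d ≤ (i:ℕ)),
          (1 - γ) ^ ((i:ℕ) - (n - d) + 1) * ‖w i‖ ^ 2 ≤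
        ‖∑ i ∈ Finset.univ.filter (fun i : Fin n => n - d ≤ (i:ℕ)), w i‖ ^ 2 := by
      intro d
      induction d with
      | zero =>
        have he : Finset.univ.filter (fun i : Fin n => n - 0 ≤ (i:ℕ)) = ∅ := by
          ext i
          simp only [Finset.mem_filter, Finset.mem_univ, true_and,
            Finset.notMem_empty, iff_false, Nat.sub_zero]
          exact not_le.mpr i.isLt
        rw [he]; simp
      | succ d ih =>
        by_cases hd : n ≤ d
        · have : n - (d+1) = n - d := by omega
          rw [this]; exact ih
        · push_neg at hd
          set k : ℕ := n - (d+1) with hkdef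
          have hkn : k < n := by omega
          have hk1 : k + 1 = n - d := by omega
          set j : Fin n := ⟨k, hkn⟩ with hj
          have hsplit : Finset.univ.filter (fun i : Fin n => k ≤ (i:ℕ)) =
              insert j (Finset.univ.filter (fun i : Fin n => k + 1 ≤ (i:ℕ))) := by
            ext i
            simp only [Finset.mem_filter, Finset.mem_univ, true_and, Finset.mem_insert]
            constructor
            · intro h
              rcases Nat.lt_or_ge k (i:ℕ) with h' | h'
              · exact Or.inr h'
              · left
                apply Fin.ext
                show (i:ℕ) = k
                omega
            · rintro (rfl | h)
              · exact le_rfl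
              · omega
          have hjnot : j ∉ Finset.univ.filter (fun i : Fin n => k + 1 ≤ (i:ℕ)) := by
            simp [hj]
          have hgt : Finset.univ.filter (fun i : Fin n => j < i) =
              Finset.univ.filter (fun i : Fin n => k + 1 ≤ (i:ℕ)) := by
            apply Finset.filter_congr
            intro i _
            exact Iff.rfl
          have hscs := hSCS j
          rw [hgt] at hscs
          have hkey := stmt19_key (w j)
            (∑ i ∈ Finset.univ.filter (fun i : Fin n => k + 1 ≤ (i:ℕ)), w i) γ hγ0 hscs
          rw [← hk1] at ih
          rw [hsplit, Finset.sum_insert hjnot, Finset.sum_insert hjnot]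
          have h1 : ((j:ℕ) - k + 1) = 1 := by simp [hj]
          rw [h1, pow_one]
          have heqsum :
              ∑ i ∈ Finset.univ.filter (fun i : Fin n => k + 1 ≤ (i:ℕ)),
                (1 - γ) ^ ((i:ℕ) - k + 1) * ‖w i‖ ^ 2 =
              (1 - γ) * ∑ i ∈ Finset.univ.filter (fun i : Fin n => k + 1 ≤ (i:ℕ)),
                (1 - γ) ^ ((i:ℕ) - (k + 1) + 1) * ‖w i‖ ^ 2 := by
            rw [Finset.mul_sum]
            apply Finset.sum_congr rfl
            intro i hi
            simp only [Finset.mem_filter, Finset.mem_univ, true_and] at hi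
            have : (i:ℕ) - k + 1 = ((i:ℕ) - (k + 1) + 1) + 1 := by omega
            rw [this, pow_succ]; ring
          rw [heqsum]
          have hih' := mul_le_mul_of_nonneg_left ih hγ'
          linarith [hkey, hih']
    have hmn := main n
    have h0 : n - n = 0 := Nat.sub_self n
    rw [h0] at hmn
    have hu : Finset.univ.filter (fun i : Fin n => 0 ≤ (i:ℕ)) = Finset.univ := by
      simp
    rw [hu] at hmn
    simpa using hmn
  · rw [Finset.mul_sum]
    apply Finset.sum_le_sum
    intro j _
    apply mul_le_mul_of_nonneg_right _ (sq_nonneg _)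
    exact pow_le_pow_of_le_one hγ' (by linarith) (by omega)
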